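/- In the asymmetric-information two-ISP linear demand game, the colluding ISP_1 (which observes θ) obtains equilibrium expected utility at least as large as the non-colluding ISP_2; specifically E[U_1] - E[U_2] = Var(D(θ))/(4α) ≥ 0, with strict inequality if and only if Var(D(θ)) > 0. -/

import Mathlib

/-- In the asymmetric-information game with equilibrium expected utilities
E[U₁] = E[D²]/(4α) + β(4α-β)E[D]²/(4α(2α-β)²) and E[U₂] = α·E[D]²/(2α-β)², the informed
ISP₁ earns at least as much as ISP₂: E[U₁] - E[U₂] = Var(D)/(4α) ≥ 0, strictly iff
Var(D) > 0. -/
theorem stmt4 {Θ : Type*} [Fintype Θ] (P D : Θ → ℝ)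
    (hP : ∀ θ, 0 ≤ P θ) (hPsum : ∑ θ, P θ = 1) (hD : ∀ θ, 0 ≤ D θ)
    (α β : ℝ) (hβ : 0 < β) (hαβ : β < α) :
    (((∑ θ, P θ * D θ ^ 2) / (4 * α) +
        β * (4 * α - β) * (∑ θ, P θ * D θ) ^ 2 / (4 * α * (2 * α - β) ^ 2)) -
      α * (∑ θ, P θ * D θ) ^ 2 / (2 * α - β) ^ 2 =
        ((∑ θ, P θ * D θ ^ 2) - (∑ θ, P θ * D θ) ^ 2) / (4 * α)) ∧
    (α * (∑ θ, P θ * D θ) ^ 2 / (2 * α - β) ^ 2 ≤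
      (∑ θ, P θ * D θ ^ 2) / (4 * α) +
        β * (4 * α - β) * (∑ θ, P θ * D θ) ^ 2 / (4 * α * (2 * α - β) ^ 2)) ∧
    (α * (∑ θ, P θ * D θ) ^ 2 / (2 * α - β) ^ 2 <
        (∑ θ, P θ * D θ ^ 2) / (4 * α) +
          β * (4 * α - β) * (∑ θ, P θ * D θ) ^ 2 / (4 * α * (2 * α - β) ^ 2) ↔
      0 < (∑ θ, P θ * D θ ^ 2) - (∑ θ, P θ * D θ) ^ 2) := by
  have hα : (0:ℝ) < α := hβ.trans hαβ
  have hne : (2 * α - β) ≠ 0 := by nlinarith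
  have hvar : 0 ≤ (∑ θ, P θ * D θ ^ 2) - (∑ θ, P θ * D θ) ^ 2 := by
    have key := Finset.sum_mul_sq_le_sq_mul_sq (Finset.univ : Finset Θ)
      (fun θ => Real.sqrt (P θ)) (fun θ => Real.sqrt (P θ) * D θ)
    have h1 : (∑ θ, Real.sqrt (P θ) * (Real.sqrt (P θ) * D θ)) = ∑ θ, P θ * D θ := by
      apply Finset.sum_congr rfl; intro θ _
      rw [← mul_assoc, Real.mul_self_sqrt (hP θ)]
    have h2 : (∑ θ, Real.sqrt (P θ) ^ 2) = 1 := by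
      rw [← hPsum]; apply Finset.sum_congr rfl; intro θ _
      rw [Real.sq_sqrt (hP θ)]
    have h3 : (∑ θ, (Real.sqrt (P θ) * D θ) ^ 2) = ∑ θ, P θ * D θ ^ 2 := by
      apply Finset.sum_congr rfl; intro θ _
      rw [mul_pow, Real.sq_sqrt (hP θ)]
    rw [h1, h2, h3, one_mul] at key
    linarith
  have heq : (((∑ θ, P θ * D θ ^ 2) / (4 * α) +
        β * (4 * α - β) * (∑ θ, P θ * D θ) ^ 2 / (4 * α * (2 * α - β) ^ 2)) -
      α * (∑ θ, P θ * D θ) ^ 2 / (2 * α - β) ^ 2 =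
        ((∑ θ, P θ * D θ ^ 2) - (∑ θ, P θ * D θ) ^ 2) / (4 * α)) := by
    have h4 : (4 * α) ≠ 0 := ne_of_gt (by linarith)
    have h2 : (2 * α - β) ^ 2 ≠ 0 := pow_ne_zero 2 hne
    rw [div_add_div _ _ h4 (mul_ne_zero h4 h2), div_sub_div _ _ (mul_ne_zero h4 (mul_ne_zero h4 h2)) h2,
      div_eq_div_iff (mul_ne_zero (mul_ne_zero h4 (mul_ne_zero h4 h2)) h2) h4]
    ring
  refine ⟨heq, ?_, ?_⟩
  · nlinarith [div_nonneg hvar (by linarith : (0:ℝ) ≤ 4 * α)]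
  · constructor
    · intro h
      by_contra hc
      push_neg at hc
      have : (∑ θ, P θ * D θ ^ 2) - (∑ θ, P θ * D θ) ^ 2 = 0 := le_antisymm hc hvar
      rw [this] at heq
      simp at heq
      linarith
    · intro h
      have : 0 < ((∑ θ, P θ * D θ ^ 2) - (∑ θ, P θ * D θ) ^ 2) / (4 * α) :=
        div_pos h (by linarith)
      linarith
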